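/- For every ε ∈ (0,1) there exist constants A > 0 and α > 0 (depending only on ε, λ_h and Δ) such that for all t > 0, P( D_h(t) < (1−ε)·λ_h·t/(1 + λ_h·Δ) ) ≤ A·e^{−α·t}; that is, the depth of the fictitious honest tree grows at rate at least λ_h/(1 + λ_h·Δ) up to exponentially small probability. -/

import Mathlib

open MeasureTheory ProbabilityTheory Filter

namespace HonestTree

/-- Honest arrival times `τ_i = Y_1 + ⋯ + Y_i` (as `Y 0 + ⋯ + Y (i-1)`). -/
def tau {Ω : Type*} (Y : ℕ → Ω → ℝ) (i : ℕ) (ω : Ω) : ℝ :=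
  ∑ j ∈ Finset.range i, Y j ω

/-- The depth `D_h(t) = sup {d ≥ 1 : T_d ≤ t}` of the fictitious honest tree at time `t`
(with `D_h(t) = 0` if `T_1 > t`), where `T_d` is the time the tree reaches depth `d`. -/
noncomputable def Dh {Ω : Type*} (T : ℕ → Ω → ℝ) (t : ℝ) (ω : Ω) : ℕ :=
  sSup {d : ℕ | 1 ≤ d ∧ T d ω ≤ t}

end HonestTree

open HonestTree

section Aux

open MeasureTheory ProbabilityTheory Filter Real Set
open scoped ENNReal NNReal

lemma expMeasure_eq_withDensity (l : ℝ) :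
    expMeasure l = MeasureTheory.volume.withDensity (exponentialPDF l) := rfl

lemma integral_exp_neg_mul_Ioi {c g : ℝ} (hc : 0 < c) :
    ∫ x in Ioi g, Real.exp (-(c * x)) = Real.exp (-(c * g)) / c := by
  have h := integral_Ioi_of_hasDerivAt_of_tendsto' (f := fun x => -Real.exp (-(c*x)) / c)
    (f' := fun x => Real.exp (-(c*x))) (a := g)
    (fun x _ => by
      have h1 : HasDerivAt (fun x => -Real.exp (-(c*x))) (c * Real.exp (-(c*x))) x :=
        ProbabilityTheory.hasDerivAt_neg_exp_mul_exp
      have h2 := h1.div_const c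
      rwa [mul_div_cancel_left₀ _ hc.ne'] at h2)
    (by simpa [neg_mul] using exp_neg_integrableOn_Ioi g hc)
    (by
      have : Tendsto (fun x : ℝ => -Real.exp (-(c*x)) / c) atTop (nhds (-0 / c)) := by
        refine Tendsto.div_const (Tendsto.neg ?_) _
        exact Real.tendsto_exp_atBot.comp
          (tendsto_neg_atBot_iff.mpr (Tendsto.const_mul_atTop hc tendsto_id))
      simpa using this)
  rw [h]
  ring

lemma lintegral_exp_expMeasure {l s g : ℝ} (hl : 0 < l) (hs : s < l) (hg : 0 ≤ g) :
    ∫⁻ u in Ioi g, ENNReal.ofReal (Real.exp (s*u)) ∂(expMeasure l)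
      = ENNReal.ofReal (l/(l-s) * Real.exp (-((l-s)*g))) := by
  have hls : 0 < l - s := by linarith
  rw [expMeasure_eq_withDensity, MeasureTheory.restrict_withDensity measurableSet_Ioi,
    lintegral_withDensity_eq_lintegral_mul _
      (show Measurable (exponentialPDF l) from (measurable_exponentialPDFReal l).ennreal_ofReal)
      (show Measurable (fun u : ℝ => ENNReal.ofReal (Real.exp (s*u))) from
        (Real.continuous_exp.comp (continuous_const.mul continuous_id)).measurable.ennreal_ofReal)]
  simp only [Pi.mul_apply]
  have hcong : ∀ u ∈ Ioi g, exponentialPDF l u * ENNReal.ofReal (Real.exp (s*u))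
      = ENNReal.ofReal ((l - s) * Real.exp (-((l-s)*u)) * (l / (l-s))) := by
    intro u hu
    have hu0 : (0:ℝ) ≤ u := le_trans hg (le_of_lt hu)
    rw [exponentialPDF_of_nonneg hu0, ← ENNReal.ofReal_mul (by positivity)]
    have : (l - s) * Real.exp (-((l-s)*u)) * (l / (l-s)) = l * Real.exp (-((l-s)*u)) := by
      field_simp
    rw [this, mul_assoc, ← Real.exp_add]
    congr 2
    ring
  rw [setLIntegral_congr_fun measurableSet_Ioi hcong]
  have hint : IntegrableOn (fun u => (l - s) * Real.exp (-((l-s)*u)) * (l / (l-s))) (Ioi g) := by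
    apply Integrable.mul_const
    apply Integrable.const_mul
    have h := exp_neg_integrableOn_Ioi g hls
    rw [show (fun x => Real.exp (-(l-s) * x)) = (fun x => Real.exp (-((l-s) * x)))
      from funext fun x => by rw [neg_mul]] at h
    exact h
  rw [← MeasureTheory.ofReal_integral_eq_lintegral_ofReal hint
    (MeasureTheory.ae_of_all _ (fun u => by positivity))]
  congr 1
  rw [MeasureTheory.integral_mul_const, MeasureTheory.integral_const_mul, integral_exp_neg_mul_Ioi hls]
  field_simp

namespace HTproof

/-- One step of the capped depth process. -/
noncomputable def step (Δ : ℝ) (d : ℕ) (p : ℕ × ℝ × ℝ) (u : ℝ) : ℕ × ℝ × ℝ :=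
  if p.1 < d ∧ p.2.1 + Δ < p.2.2 + u then (p.1 + 1, p.2.2 + u, p.2.2 + u)
  else (p.1, p.2.1, p.2.2 + u)

/-- The capped depth process after `n+1` arrivals. -/
noncomputable def st (Δ : ℝ) (d : ℕ) (y : ℕ → ℝ) : ℕ → ℕ × ℝ × ℝ
  | 0 => (1, y 0, y 0)
  | n+1 => step Δ d (st Δ d y n) (y (n+1))

variable {Δ : ℝ} {d : ℕ} {y z : ℕ → ℝ}

@[simp] lemma st_zero : st Δ d y 0 = (1, y 0, y 0) := rfl

lemma st_succ (n : ℕ) : st Δ d y (n+1) = step Δ d (st Δ d y n) (y (n+1)) := rfl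

lemma st_congr (n : ℕ) (h : ∀ i ≤ n, y i = z i) : st Δ d y n = st Δ d z n := by
  induction n with
  | zero => simp [h 0 (le_refl 0)]
  | succ n ih =>
      rw [st_succ, st_succ, ih (fun i hi => h i (le_trans hi (Nat.le_succ n))),
        h (n+1) (le_refl _)]

lemma st_fst_pos (n : ℕ) : 1 ≤ (st Δ d y n).1 := by
  induction n with
  | zero => simp
  | succ n ih =>
      rw [st_succ, step]
      split <;> simp <;> omega

lemma st_fst_le (hd : 1 ≤ d) (n : ℕ) : (st Δ d y n).1 ≤ d := by
  induction n with
  | zero => simpa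
  | succ n ih =>
      rw [st_succ, step]
      split
      · next h => exact h.1
      · exact ih

lemma st_inv2 (hΔ : 0 ≤ Δ) (n : ℕ) :
    (st Δ d y n).1 < d → (st Δ d y n).2.2 ≤ (st Δ d y n).2.1 + Δ := by
  induction n with
  | zero => intro _; simp; linarith
  | succ n ih =>
      rw [st_succ, step]
      split
      · intro _; simp; linarith
      · next h =>
          intro _
          simp only
          by_cases hlt : (st Δ d y n).1 < d
          · have := not_lt.mp fun hc => h ⟨hlt, hc⟩
            exact this
          · omega

lemma st_fst_mono (n : ℕ) : (st Δ d y n).1 ≤ (st Δ d y (n+1)).1 := by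
  rw [st_succ, step]; split <;> simp

lemma st_fst_mono' : Monotone fun n => (st Δ d y n).1 :=
  monotone_nat_of_le_succ st_fst_mono

lemma st_fst_mono'' {n m : ℕ} (h : n ≤ m) : (st Δ d y n).1 ≤ (st Δ d y m).1 :=
  st_fst_mono' h

lemma st_fst_succ_le (n : ℕ) : (st Δ d y (n+1)).1 ≤ (st Δ d y n).1 + 1 := by
  rw [st_succ, step]; split <;> simp

lemma st_frozen (n : ℕ) (h : (st Δ d y (n+1)).1 = (st Δ d y n).1) :
    (st Δ d y (n+1)).2.1 = (st Δ d y n).2.1 := by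
  revert h
  rw [st_succ, step]
  split
  · intro h; simp at h
  · intro _; rfl

lemma st_thd (n : ℕ) : (st Δ d y n).2.2 = ∑ j ∈ Finset.range (n+1), y j := by
  induction n with
  | zero => simp
  | succ n ih =>
      have h : (st Δ d y (n+1)).2.2 = (st Δ d y n).2.2 + y (n+1) := by
        rw [st_succ, step]; split <;> rfl
      rw [h, ih]
      simp [Finset.sum_range_succ]

lemma st_fst_le_succ (n : ℕ) : (st Δ d y n).1 ≤ n + 1 := by
  induction n with
  | zero => simp
  | succ n ih => exact le_trans (st_fst_succ_le n) (by omega)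

lemma st_hit (n : ℕ) (e : ℕ) (he : 1 ≤ e) (hle : e ≤ (st Δ d y n).1) :
    ∃ m, (st Δ d y m).1 = e := by
  induction n with
  | zero => exact ⟨0, by simp at hle ⊢; omega⟩
  | succ n ih =>
      by_cases h : e ≤ (st Δ d y n).1
      · exact ih h
      · refine ⟨n+1, ?_⟩
        have h2 := st_fst_succ_le (Δ := Δ) (d := d) (y := y) n
        omega

lemma st_frozen_run (n m : ℕ) (hnm : n ≤ m) (h : (st Δ d y m).1 = (st Δ d y n).1) :
    (st Δ d y m).2.1 = (st Δ d y n).2.1 := by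
  induction m with
  | zero => have h0 : n = 0 := Nat.le_zero.mp hnm; simp [h0]
  | succ m ih =>
      rcases Nat.lt_or_ge n (m+1) with hlt | hge
      · have hnm' : n ≤ m := by omega
        have ha := st_fst_mono'' (Δ := Δ) (d := d) (y := y) hnm'
        have hb := st_fst_mono (Δ := Δ) (d := d) (y := y) m
        have h1 : (st Δ d y m).1 = (st Δ d y n).1 := by omega
        rw [st_frozen m (by omega), ih hnm' h1]
      · have h0 : n = m + 1 := by omega
        simp [h0]

lemma measurable_step (Δ : ℝ) (d : ℕ) :
    Measurable (fun q : (ℕ × ℝ × ℝ) × ℝ => step Δ d q.1 q.2) := by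
  unfold step
  have hc : MeasurableSet {q : (ℕ × ℝ × ℝ) × ℝ |
      q.1.1 < d ∧ q.1.2.1 + Δ < q.1.2.2 + q.2} := by
    refine MeasurableSet.inter ?_ ?_
    · exact measurable_fst.fst (measurableSet_Iio (a := d))
    · exact measurableSet_lt
        ((measurable_fst.snd.fst).add measurable_const)
        ((measurable_fst.snd.snd).add measurable_snd)
  refine Measurable.ite hc ?_ ?_
  · exact ((measurable_fst.fst.add_const 1 :
        Measurable fun q : (ℕ × ℝ × ℝ) × ℝ => q.1.1 + 1).prodMk
      (((measurable_fst.snd.snd).add measurable_snd).prodMk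
        ((measurable_fst.snd.snd).add measurable_snd)))
  · exact (measurable_fst.fst.prodMk
      ((measurable_fst.snd.fst).prodMk
        ((measurable_fst.snd.snd).add measurable_snd)))

lemma measurable_st (Δ : ℝ) (d : ℕ) (n : ℕ) : Measurable (fun y : ℕ → ℝ => st Δ d y n) := by
  induction n with
  | zero =>
      have h0 : Measurable fun y : ℕ → ℝ => y 0 := measurable_pi_apply 0
      exact measurable_const.prodMk (h0.prodMk h0)
  | succ n ih =>
      exact (measurable_step Δ d).comp
        (ih.prodMk (show Measurable fun y : ℕ → ℝ => y (n+1) from measurable_pi_apply _))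


section Weight

variable {l s Δ : ℝ} {d : ℕ}

lemma measurable_ofReal_exp (s : ℝ) :
    Measurable fun u : ℝ => ENNReal.ofReal (Real.exp (s*u)) := by
  refine Measurable.ennreal_ofReal ?_
  exact Real.measurable_exp.comp (measurable_const.mul measurable_id)

/-- The exponential (super)martingale weight attached to a state. -/
noncomputable def Wr (l s Δ : ℝ) (p : ℕ × ℝ × ℝ) : ℝ :=
  Real.exp (s * (p.2.1 + Δ - Δ * p.1)) * ((l - s)/l)^p.1

lemma Wr_nonneg (hl : 0 < l) (hsl : s < l) (p : ℕ × ℝ × ℝ) : 0 ≤ Wr l s Δ p := by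
  have h1 : (0:ℝ) < (l - s)/l := div_pos (by linarith) hl
  unfold Wr
  positivity

lemma measurable_Wr : Measurable (Wr l s Δ) := by
  unfold Wr
  apply Measurable.mul
  · refine Real.measurable_exp.comp (Measurable.const_mul ?_ s)
    have h1 : Measurable fun p : ℕ × ℝ × ℝ => p.2.1 + Δ := measurable_fst.comp measurable_snd |>.add_const Δ
    have h2 : Measurable fun p : ℕ × ℝ × ℝ => Δ * (p.1 : ℝ) :=
      (measurable_from_nat (f := fun n : ℕ => ((n:ℝ)))).comp measurable_fst |>.const_mul Δ
    exact h1.sub h2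
  · exact (measurable_from_nat (f := fun n : ℕ => ((l-s)/l)^n)).comp measurable_fst

lemma expMeasure_Iic (hl : 0 < l) {g : ℝ} (hg : 0 ≤ g) :
    expMeasure l (Iic g) = ENNReal.ofReal (1 - Real.exp (-(l*g))) := by
  rw [expMeasure_eq_withDensity, withDensity_apply _ measurableSet_Iic,
    lintegral_exponentialPDF_eq_antiDeriv hl g, if_pos hg]

lemma expMeasure_Iic_zero (hl : 0 < l) : expMeasure l (Iic 0) = 0 := by
  rw [expMeasure_Iic hl le_rfl]
  simp

lemma lintegral_exp_expMeasure_univ (hl : 0 < l) (hsl : s < l) :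
    ∫⁻ u, ENNReal.ofReal (Real.exp (s*u)) ∂(expMeasure l) = ENNReal.ofReal (l/(l-s)) := by
  rw [← lintegral_add_compl (A := Iic (0:ℝ)) _ measurableSet_Iic,
    setLIntegral_measure_zero _ _ (expMeasure_Iic_zero hl), compl_Iic,
    lintegral_exp_expMeasure hl hsl le_rfl, zero_add]
  simp

lemma key_step (hl : 0 < l) (hsl : s < l) (hΔ : 0 ≤ Δ)
    (p : ℕ × ℝ × ℝ) (hinv : p.1 < d → p.2.2 ≤ p.2.1 + Δ) :
    ∫⁻ u, ENNReal.ofReal (Wr l s Δ (step Δ d p u)) ∂(expMeasure l)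
      ≤ ENNReal.ofReal (Wr l s Δ p) := by
  haveI : IsProbabilityMeasure (expMeasure l) := isProbabilityMeasure_expMeasure hl
  have hls : 0 < l - s := by linarith
  have hq : (0:ℝ) < (l - s)/l := div_pos hls hl
  by_cases hpd : p.1 < d
  · set g : ℝ := p.2.1 + Δ - p.2.2 with hgdef
    have hg : 0 ≤ g := by have := hinv hpd; simp only [hgdef]; linarith
    set K : ℝ := Real.exp (s * (p.2.2 + Δ - Δ * (p.1+1 : ℕ))) * ((l - s)/l)^(p.1+1) with hK
    have hKnn : 0 ≤ K := by positivity
    rw [← lintegral_add_compl (A := Iic g) _ measurableSet_Iic, compl_Iic]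
    have h1 : ∫⁻ u in Iic g, ENNReal.ofReal (Wr l s Δ (step Δ d p u)) ∂(expMeasure l)
        = ENNReal.ofReal (Wr l s Δ p) * ENNReal.ofReal (1 - Real.exp (-(l*g))) := by
      rw [setLIntegral_congr_fun measurableSet_Iic
        (fun u (hu : u ≤ g) => ?_), setLIntegral_const,
        expMeasure_Iic hl hg]
      have hni : ¬ (p.1 < d ∧ p.2.1 + Δ < p.2.2 + u) := by
        rintro ⟨-, hlt⟩
        have : p.2.2 + u ≤ p.2.1 + Δ := by simp only [hgdef] at hu; linarith
        linarith
      rw [step, if_neg hni]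
      rfl
    have h2 : ∫⁻ u in Ioi g, ENNReal.ofReal (Wr l s Δ (step Δ d p u)) ∂(expMeasure l)
        = ENNReal.ofReal (Wr l s Δ p) * ENNReal.ofReal (Real.exp (-(l*g))) := by
      have hpt : ∀ u ∈ Ioi g, ENNReal.ofReal (Wr l s Δ (step Δ d p u))
          = ENNReal.ofReal K * ENNReal.ofReal (Real.exp (s*u)) := by
        intro u hu
        have hu' : g < u := hu
        have htrig : p.1 < d ∧ p.2.1 + Δ < p.2.2 + u := by
          refine ⟨hpd, ?_⟩
          simp only [hgdef] at hu'; linarith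
        rw [step, if_pos htrig, ← ENNReal.ofReal_mul hKnn]
        congr 1
        show Real.exp (s * ((p.2.2 + u) + Δ - Δ * ((p.1+1 : ℕ)))) * ((l - s)/l)^(p.1+1) = _
        rw [hK]
        rw [show (Real.exp (s * (p.2.2 + Δ - Δ * (p.1+1 : ℕ))) * ((l - s)/l)^(p.1+1))
            * Real.exp (s*u)
          = (Real.exp (s * (p.2.2 + Δ - Δ * (p.1+1 : ℕ))) * Real.exp (s*u))
            * ((l - s)/l)^(p.1+1) from by ring, ← Real.exp_add]
        congr 2
        ring
      rw [setLIntegral_congr_fun measurableSet_Ioi hpt,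
        lintegral_const_mul _ (measurable_ofReal_exp s),
        lintegral_exp_expMeasure hl hsl hg, ← ENNReal.ofReal_mul hKnn,
        ← ENNReal.ofReal_mul (Wr_nonneg hl hsl p)]
      congr 1
      have hqq : ((l - s)/l)^(p.1+1) * (l/(l-s)) = ((l-s)/l)^p.1 := by
        rw [pow_succ, mul_assoc, div_mul_div_comm, mul_comm (l-s) l,
          div_self (by positivity), mul_one]
      calc K * (l/(l-s) * Real.exp (-((l-s)*g)))
          = (Real.exp (s * (p.2.2 + Δ - Δ * (p.1+1 : ℕ))) * Real.exp (-((l-s)*g)))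
            * (((l - s)/l)^(p.1+1) * (l/(l-s))) := by rw [hK]; ring
        _ = Real.exp (s * (p.2.2 + Δ - Δ * (p.1+1 : ℕ)) + -((l-s)*g)) * ((l-s)/l)^p.1 := by
            rw [hqq, ← Real.exp_add]
        _ = Real.exp (s * (p.2.1 + Δ - Δ * p.1) + -(l*g)) * ((l-s)/l)^p.1 := by
            congr 2
            simp only [hgdef]
            push_cast
            ring
        _ = Wr l s Δ p * Real.exp (-(l*g)) := by rw [Wr, Real.exp_add]; ring
    have hx : Real.exp (-(l*g)) ≤ 1 :=
      Real.exp_le_one_iff.mpr (neg_nonpos.mpr (mul_nonneg hl.le hg))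
    rw [h1, h2, ← mul_add, ← ENNReal.ofReal_add (by linarith)
      (Real.exp_nonneg _), sub_add_cancel, ENNReal.ofReal_one, mul_one]
  · have hstep : ∀ u : ℝ, Wr l s Δ (step Δ d p u) = Wr l s Δ p := by
      intro u
      rw [step, if_neg (fun h => hpd h.1)]
      rfl
    simp only [hstep]
    rw [lintegral_const, measure_univ, mul_one]

end Weight

section Prob

variable {Ω : Type*} [MeasurableSpace Ω] {P : Measure Ω} [IsProbabilityMeasure P]
  {l s Δ : ℝ} {d : ℕ} {Y : ℕ → Ω → ℝ}

lemma lintegral_comp_indep (hmeas : ∀ i, Measurable (Y i))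
    (hdist : ∀ i, P.map (Y i) = expMeasure l)
    (hindep : iIndepFun Y P)
    (n : ℕ) {S : Type*} [MeasurableSpace S] (g : (Fin (n+1) → ℝ) → S) (hg : Measurable g)
    (F : S × ℝ → ℝ≥0∞) (hF : Measurable F) :
    ∫⁻ ω, F (g (fun i => Y i ω), Y (n+1) ω) ∂P
      = ∫⁻ ω, ∫⁻ u, F (g (fun i => Y i ω), u) ∂(expMeasure l) ∂P := by
  haveI : IsProbabilityMeasure (expMeasure l) := by
    rw [← hdist 0]; exact Measure.isProbabilityMeasure_map (hmeas 0).aemeasurable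
  set X : Ω → S := fun ω => g (fun i : Fin (n+1) => Y i ω) with hX
  have hXm : Measurable X := hg.comp (measurable_pi_lambda _ fun i => hmeas i)
  have hdisj : Disjoint (Finset.range (n+1)) ({n+1} : Finset ℕ) := by
    simp [Finset.disjoint_singleton_right]
  have hAB := hindep.indepFun_finset (Finset.range (n+1)) {n+1} hdisj hmeas
  have φmeas : Measurable (fun w : ((i : {x : ℕ // x ∈ Finset.range (n+1)}) → ℝ) =>
      g (fun i : Fin (n+1) => w ⟨i.1, Finset.mem_range.mpr i.isLt⟩)) :=
    hg.comp (measurable_pi_lambda _ fun i => measurable_pi_apply _)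
  have ψmeas : Measurable (fun w : ((i : {x : ℕ // x ∈ ({n+1} : Finset ℕ)}) → ℝ) =>
      w ⟨n+1, Finset.mem_singleton_self _⟩) := measurable_pi_apply _
  have hXY : IndepFun X (Y (n+1)) P := hAB.comp φmeas ψmeas
  have hmap : P.map (fun ω => (X ω, Y (n+1) ω)) = (P.map X).prod (P.map (Y (n+1))) :=
    (indepFun_iff_map_prod_eq_prod_map_map hXm.aemeasurable (hmeas _).aemeasurable).mp hXY
  have hinner : Measurable fun x : S => ∫⁻ u, F (x, u) ∂(expMeasure l) :=
    Measurable.lintegral_prod_right hF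
  calc ∫⁻ ω, F (X ω, Y (n+1) ω) ∂P
      = ∫⁻ p, F p ∂(P.map (fun ω => (X ω, Y (n+1) ω))) :=
        (lintegral_map hF (hXm.prodMk (hmeas _))).symm
    _ = ∫⁻ p, F p ∂((P.map X).prod (expMeasure l)) := by rw [hmap, hdist]
    _ = ∫⁻ x, ∫⁻ u, F (x, u) ∂(expMeasure l) ∂(P.map X) := lintegral_prod _ hF.aemeasurable
    _ = ∫⁻ ω, ∫⁻ u, F (X ω, u) ∂(expMeasure l) ∂P := lintegral_map hinner hXm

lemma measurable_stY (n : ℕ) (hmeas : ∀ i, Measurable (Y i)) :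
    Measurable (fun ω => st Δ d (fun i => Y i ω) n) :=
  (measurable_st Δ d n).comp (measurable_pi_lambda _ fun i => hmeas i)

lemma W_int_le_one (hl : 0 < l) (hs0 : 0 < s) (hsl : s < l) (hΔ : 0 ≤ Δ)
    (hmeas : ∀ i, Measurable (Y i))
    (hdist : ∀ i, P.map (Y i) = expMeasure l)
    (hindep : iIndepFun Y P) (n : ℕ) :
    ∫⁻ ω, ENNReal.ofReal (Wr l s Δ (st Δ d (fun i => Y i ω) n)) ∂P ≤ 1 := by
  have hls : 0 < l - s := by linarith
  induction n with
  | zero =>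
      have hW0 : ∀ ω, Wr l s Δ (st Δ d (fun i => Y i ω) 0)
          = (l-s)/l * Real.exp (s * (Y 0 ω)) := by
        intro ω
        rw [st_zero, Wr]
        simp
        ring
      simp only [hW0]
      have : ∀ ω, ENNReal.ofReal ((l-s)/l * Real.exp (s * (Y 0 ω)))
          = ENNReal.ofReal ((l-s)/l) * ENNReal.ofReal (Real.exp (s * (Y 0 ω))) := by
        intro ω; rw [ENNReal.ofReal_mul (by positivity)]
      simp only [this]
      rw [lintegral_const_mul _
        (show Measurable fun ω => ENNReal.ofReal (Real.exp (s * Y 0 ω)) from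
          (measurable_ofReal_exp s).comp (hmeas 0))]
      have hmap : ∫⁻ ω, ENNReal.ofReal (Real.exp (s * (Y 0 ω))) ∂P
          = ∫⁻ u, ENNReal.ofReal (Real.exp (s * u)) ∂(expMeasure l) := by
        rw [← hdist 0, lintegral_map (measurable_ofReal_exp s) (hmeas 0)]
      rw [hmap, lintegral_exp_expMeasure_univ hl hsl, ← ENNReal.ofReal_mul (by positivity)]
      rw [div_mul_div_comm, mul_comm (l-s) l, div_self (by positivity), ENNReal.ofReal_one]
  | succ n ih =>
      set F : (ℕ × ℝ × ℝ) × ℝ → ℝ≥0∞ :=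
        fun q => ENNReal.ofReal (Wr l s Δ (step Δ d q.1 q.2)) with hF
      have hFm : Measurable F :=
        (measurable_Wr.comp (measurable_step Δ d)).ennreal_ofReal
      set g : (Fin (n+1) → ℝ) → ℕ × ℝ × ℝ :=
        fun v => st Δ d (fun i : ℕ => if h : i < n+1 then v ⟨i, h⟩ else 0) n with hg
      have hgm : Measurable g := by
        refine (measurable_st Δ d n).comp (measurable_pi_lambda _ fun i => ?_)
        by_cases h : i < n+1
        · simp only [dif_pos h]; exact measurable_pi_apply _
        · simp only [dif_neg h]; exact measurable_const
      have hgY : ∀ ω, g (fun i : Fin (n+1) => Y i ω) = st Δ d (fun i => Y i ω) n := by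
        intro ω
        refine st_congr n (fun i hi => ?_)
        rw [dif_pos (by omega)]
      have hrw : ∀ ω, ENNReal.ofReal (Wr l s Δ (st Δ d (fun i => Y i ω) (n+1)))
          = F (g (fun i : Fin (n+1) => Y i ω), Y (n+1) ω) := by
        intro ω
        rw [hF, hgY ω, st_succ]
      calc ∫⁻ ω, ENNReal.ofReal (Wr l s Δ (st Δ d (fun i => Y i ω) (n+1))) ∂P
          = ∫⁻ ω, F (g (fun i : Fin (n+1) => Y i ω), Y (n+1) ω) ∂P := by
            simp only [hrw]
        _ = ∫⁻ ω, ∫⁻ u, F (g (fun i : Fin (n+1) => Y i ω), u) ∂(expMeasure l) ∂P :=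
            lintegral_comp_indep hmeas hdist hindep n g hgm F hFm
        _ ≤ ∫⁻ ω, ENNReal.ofReal (Wr l s Δ (st Δ d (fun i => Y i ω) n)) ∂P := by
            refine lintegral_mono (fun ω => ?_)
            rw [hgY ω]
            exact key_step hl hsl hΔ _ (st_inv2 hΔ n)
        _ ≤ 1 := ih

lemma measure_Hn_le (hl : 0 < l) (hs0 : 0 < s) (hsl : s < l) (hΔ : 0 ≤ Δ)
    (hmeas : ∀ i, Measurable (Y i))
    (hdist : ∀ i, P.map (Y i) = expMeasure l)
    (hindep : iIndepFun Y P) (t : ℝ) (n : ℕ) :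
    P {ω | (st Δ d (fun i => Y i ω) n).1 = d ∧ t < (st Δ d (fun i => Y i ω) n).2.1}
      ≤ ENNReal.ofReal ((l/(l-s))^d * Real.exp (s*Δ*d - s*Δ - s*t)) := by
  have hls : 0 < l - s := by linarith
  set c : ℝ := (l/(l-s))^d * Real.exp (s*Δ*d - s*Δ - s*t) with hc
  have hcnn : 0 ≤ c := by positivity
  set H : Set Ω := {ω | (st Δ d (fun i => Y i ω) n).1 = d
    ∧ t < (st Δ d (fun i => Y i ω) n).2.1} with hHdef
  have hHm : MeasurableSet H := by
    have h1 : MeasurableSet {p : ℕ × ℝ × ℝ | p.1 = d ∧ t < p.2.1} := by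
      refine MeasurableSet.inter (measurable_fst (measurableSet_singleton d)) ?_
      exact measurableSet_lt measurable_const measurable_snd.fst
    exact (measurable_stY n hmeas) h1
  have hpt : ∀ ω, H.indicator (1 : Ω → ℝ≥0∞) ω
      ≤ ENNReal.ofReal (Wr l s Δ (st Δ d (fun i => Y i ω) n)) * ENNReal.ofReal c := by
    intro ω
    by_cases hω : ω ∈ H
    · rw [Set.indicator_of_mem hω, Pi.one_apply]
      set p := st Δ d (fun i => Y i ω) n with hp
      have h1 : Wr l s Δ p * c = Real.exp (s * (p.2.1 - t)) := by
        rw [Wr, hω.1, hc]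
        rw [show Real.exp (s * (p.2.1 + Δ - Δ * d)) * ((l - s)/l)^d
            * ((l/(l-s))^d * Real.exp (s*Δ*d - s*Δ - s*t))
          = (Real.exp (s * (p.2.1 + Δ - Δ * d)) * Real.exp (s*Δ*d - s*Δ - s*t))
            * (((l - s)/l) * (l/(l-s)))^d from by rw [mul_pow]; ring,
          ← Real.exp_add, div_mul_div_comm, mul_comm (l-s) l, div_self (by positivity),
          one_pow, mul_one]
        congr 1
        ring
      rw [← ENNReal.ofReal_mul (Wr_nonneg hl hsl p), h1, ← ENNReal.ofReal_one]
      refine ENNReal.ofReal_le_ofReal (Real.one_le_exp ?_)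
      have := hω.2
      have hBt : t < p.2.1 := this
      nlinarith
    · rw [Set.indicator_of_notMem hω]
      exact bot_le
  calc P H = ∫⁻ ω, H.indicator (1 : Ω → ℝ≥0∞) ω ∂P := by
        rw [lintegral_indicator_one hHm]
    _ ≤ ∫⁻ ω, ENNReal.ofReal (Wr l s Δ (st Δ d (fun i => Y i ω) n)) * ENNReal.ofReal c ∂P :=
        lintegral_mono hpt
    _ = (∫⁻ ω, ENNReal.ofReal (Wr l s Δ (st Δ d (fun i => Y i ω) n)) ∂P) * ENNReal.ofReal c :=
        lintegral_mul_const _ ((measurable_Wr.comp (measurable_stY n hmeas)).ennreal_ofReal)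
    _ ≤ 1 * ENNReal.ofReal c := by
        exact mul_le_mul_left (W_int_le_one hl hs0 hsl hΔ hmeas hdist hindep n) _
    _ = ENNReal.ofReal c := one_mul _

end Prob

section Pointwise

variable {Δ : ℝ} {d : ℕ} {y : ℕ → ℝ} {T : ℕ → ℝ}

/-- Pointwise facts, for a fixed sample path `y` with positive entries and unbounded sums. -/
lemma tau_strictMono (hy : ∀ i, 0 < y i) :
    StrictMono (fun i => ∑ j ∈ Finset.range i, y j) := by
  apply strictMono_nat_of_lt_succ
  intro n
  rw [Finset.sum_range_succ]
  have := hy n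
  linarith

lemma B_eq_T (hΔ : 0 ≤ Δ) (hy : ∀ i, 0 < y i)
    (hT1 : T 1 = ∑ j ∈ Finset.range 1, y j)
    (hTrec : ∀ e : ℕ, 1 ≤ e →
      T (e + 1) = sInf {x : ℝ | ∃ i : ℕ, 1 ≤ i ∧ x = ∑ j ∈ Finset.range i, y j ∧ T e + Δ < x})
    (n : ℕ) : (st Δ d y n).2.1 = T (st Δ d y n).1 := by
  induction n with
  | zero =>
      rw [show (st Δ d y 0) = (1, y 0, y 0) from rfl]
      simp [hT1]
  | succ n ih =>
      by_cases htrig : (st Δ d y n).1 < d ∧ (st Δ d y n).2.1 + Δ < (st Δ d y n).2.2 + y (n+1)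
      · have hfst : (st Δ d y (n+1)).1 = (st Δ d y n).1 + 1 := by
          rw [st_succ, step, if_pos htrig]
        have hsnd : (st Δ d y (n+1)).2.1 = (st Δ d y n).2.2 + y (n+1) := by
          rw [st_succ, step, if_pos htrig]
        set e := (st Δ d y n).1 with he
        have he1 : 1 ≤ e := st_fst_pos n
        have hCn : (st Δ d y n).2.2 = ∑ j ∈ Finset.range (n+1), y j := st_thd n
        have hCn1 : (st Δ d y n).2.2 + y (n+1) = ∑ j ∈ Finset.range (n+2), y j := by
          rw [hCn, ← Finset.sum_range_succ]
        have hmem : (∑ j ∈ Finset.range (n+2), y j) ∈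
            {x : ℝ | ∃ i : ℕ, 1 ≤ i ∧ x = ∑ j ∈ Finset.range i, y j ∧ T e + Δ < x} := by
          refine ⟨n+2, by omega, rfl, ?_⟩
          rw [← ih, ← hCn1]
          exact htrig.2
        have hlb : ∀ x ∈ {x : ℝ | ∃ i : ℕ, 1 ≤ i ∧ x = ∑ j ∈ Finset.range i, y j ∧ T e + Δ < x},
            (∑ j ∈ Finset.range (n+2), y j) ≤ x := by
          rintro x ⟨i, hi1, rfl, hgt⟩
          have hCle : (st Δ d y n).2.2 ≤ (st Δ d y n).2.1 + Δ := st_inv2 hΔ n htrig.1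
          have h2 : (∑ j ∈ Finset.range (n+1), y j) < ∑ j ∈ Finset.range i, y j := by
            rw [← hCn]
            calc (st Δ d y n).2.2 ≤ (st Δ d y n).2.1 + Δ := hCle
              _ = T e + Δ := by rw [ih]
              _ < _ := hgt
          have hi : n + 1 < i := by
            by_contra hcon
            exact absurd ((tau_strictMono hy).monotone (not_lt.mp hcon)) (not_le.mpr h2)
          exact (tau_strictMono hy).monotone hi
        rw [hsnd, hfst, hTrec e he1, hCn1]
        exact le_antisymm
          (le_csInf ⟨_, hmem⟩ hlb)
          (csInf_le ⟨_, hlb⟩ hmem)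
      · have hfst : (st Δ d y (n+1)).1 = (st Δ d y n).1 := by
          rw [st_succ, step, if_neg htrig]
        have hsnd : (st Δ d y (n+1)).2.1 = (st Δ d y n).2.1 := by
          rw [st_succ, step, if_neg htrig]
        rw [hfst, hsnd, ih]

lemma tau_le_T (hΔ : 0 ≤ Δ) (hy : ∀ i, 0 < y i)
    (hub : ∀ r : ℝ, ∃ n : ℕ, r < ∑ j ∈ Finset.range (n+1), y j)
    (hT1 : T 1 = ∑ j ∈ Finset.range 1, y j)
    (hTrec : ∀ e : ℕ, 1 ≤ e →
      T (e + 1) = sInf {x : ℝ | ∃ i : ℕ, 1 ≤ i ∧ x = ∑ j ∈ Finset.range i, y j ∧ T e + Δ < x})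
    (i : ℕ) (hi : 1 ≤ i) : (∑ j ∈ Finset.range i, y j) ≤ T i := by
  induction i with
  | zero => omega
  | succ i ih =>
      rcases Nat.eq_or_lt_of_le hi with h1 | h1
      · rw [← h1] at *
        rw [hT1]
      · have hi1 : 1 ≤ i := by omega
        have hIH := ih hi1
        rw [hTrec i hi1]
        obtain ⟨m, hm⟩ := hub (T i + Δ)
        refine le_csInf ⟨_, ⟨m+1, by omega, rfl, hm⟩⟩ ?_
        rintro x ⟨k, hk1, rfl, hgt⟩
        have h2 : (∑ j ∈ Finset.range i, y j) < ∑ j ∈ Finset.range k, y j := by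
          calc (∑ j ∈ Finset.range i, y j) ≤ T i := hIH
            _ ≤ T i + Δ := by linarith
            _ < _ := hgt
        have hik : i < k := by
          by_contra hcon
          exact absurd ((tau_strictMono hy).monotone (not_lt.mp hcon)) (not_le.mpr h2)
        exact (tau_strictMono hy).monotone hik

lemma exists_hit_top (hΔ : 0 ≤ Δ) (hd : 1 ≤ d) (hy : ∀ i, 0 < y i)
    (hub : ∀ r : ℝ, ∃ n : ℕ, r < ∑ j ∈ Finset.range (n+1), y j) :
    ∃ n, (st Δ d y n).1 = d := by
  suffices h : ∀ e : ℕ, 1 ≤ e → e ≤ d → ∃ n, (st Δ d y n).1 = e from h d hd le_rfl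
  intro e he
  induction e, he using Nat.le_induction with
  | base => exact fun _ => ⟨0, rfl⟩
  | succ e he1 ih =>
      intro hed
      obtain ⟨n, hn⟩ := ih (by omega)
      set b := (st Δ d y n).2.1 with hb
      obtain ⟨m, hm⟩ := hub (max (b + Δ) (∑ j ∈ Finset.range (n+1), y j))
      have hm1 : b + Δ < ∑ j ∈ Finset.range (m+1), y j :=
        lt_of_le_of_lt (le_max_left _ _) hm
      have hm2 : (∑ j ∈ Finset.range (n+1), y j) < ∑ j ∈ Finset.range (m+1), y j :=
        lt_of_le_of_lt (le_max_right _ _) hm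
      have hnm : n ≤ m := by
        by_contra hcon
        have : m + 1 ≤ n + 1 := by omega
        exact absurd ((tau_strictMono hy).monotone this) (not_le.mpr hm2)
      by_cases hcase : e + 1 ≤ (st Δ d y m).1
      · exact st_hit m (e+1) (by omega) hcase
      · have hEm : (st Δ d y m).1 = e := by
          have := st_fst_mono'' (Δ := Δ) (d := d) (y := y) hnm
          omega
        have hBm : (st Δ d y m).2.1 = b := by
          rw [hb]
          exact st_frozen_run n m hnm (by omega)
        refine ⟨m+1, ?_⟩
        have htrig : (st Δ d y m).1 < d ∧ (st Δ d y m).2.1 + Δ < (st Δ d y m).2.2 + y (m+1) := by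
          constructor
          · omega
          · rw [hBm, st_thd m]
            have := hy (m+1)
            linarith
        rw [st_succ, step, if_pos htrig, hEm]

end Pointwise

end HTproof

namespace HTproof

section AS

variable {Ω : Type*} [MeasurableSpace Ω] {P : Measure Ω} [IsProbabilityMeasure P]
  {l : ℝ} {Y : ℕ → Ω → ℝ}

lemma huniv_exp_neg (hl : 0 < l) :
    ∫⁻ u, ENNReal.ofReal (Real.exp (-u)) ∂(expMeasure l) = ENNReal.ofReal (l/(l+1)) := by
  have h := lintegral_exp_expMeasure_univ (s := -1) hl (by linarith)
  simpa [neg_one_mul, sub_neg_eq_add] using h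

lemma exp_neg_tau_le (hl : 0 < l) (hmeas : ∀ i, Measurable (Y i))
    (hdist : ∀ i, P.map (Y i) = expMeasure l)
    (hindep : iIndepFun Y P) (n : ℕ) :
    ∫⁻ ω, ENNReal.ofReal (Real.exp (-(∑ j ∈ Finset.range (n+1), Y j ω))) ∂P
      ≤ ENNReal.ofReal ((l/(l+1))^(n+1)) := by
  have hfm : Measurable fun u : ℝ => ENNReal.ofReal (Real.exp (-u)) :=
    (Real.measurable_exp.comp measurable_neg).ennreal_ofReal
  induction n with
  | zero =>
      have h0 : ∀ ω, ENNReal.ofReal (Real.exp (-(∑ j ∈ Finset.range 1, Y j ω)))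
          = ENNReal.ofReal (Real.exp (-(Y 0 ω))) := by
        intro ω; rw [Finset.sum_range_one]
      calc ∫⁻ ω, ENNReal.ofReal (Real.exp (-(∑ j ∈ Finset.range 1, Y j ω))) ∂P
          = ∫⁻ ω, ENNReal.ofReal (Real.exp (-(Y 0 ω))) ∂P := by simp only [h0]
        _ = ∫⁻ u, ENNReal.ofReal (Real.exp (-u)) ∂(P.map (Y 0)) :=
            (lintegral_map hfm (hmeas 0)).symm
        _ = ENNReal.ofReal (l/(l+1)) := by rw [hdist 0, huniv_exp_neg hl]
        _ = ENNReal.ofReal ((l/(l+1))^(0+1)) := by norm_num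
        _ ≤ ENNReal.ofReal ((l/(l+1))^(0+1)) := le_rfl
  | succ n ih =>
      set F : ℝ × ℝ → ℝ≥0∞ := fun q => ENNReal.ofReal (Real.exp (-(q.1 + q.2))) with hF
      have hFm : Measurable F := by
        refine Measurable.ennreal_ofReal ?_
        exact Real.measurable_exp.comp (measurable_fst.add measurable_snd).neg
      set g : (Fin (n+1) → ℝ) → ℝ :=
        fun v => ∑ j ∈ Finset.range (n+1), (if h : j < n+1 then v ⟨j, h⟩ else 0) with hg
      have hgm : Measurable g := by
        refine Finset.measurable_sum _ (fun j hj => ?_)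
        by_cases h : j < n+1
        · simp only [dif_pos h]; exact measurable_pi_apply _
        · simp only [dif_neg h]; exact measurable_const
      have hgY : ∀ ω, g (fun i : Fin (n+1) => Y i ω) = ∑ j ∈ Finset.range (n+1), Y j ω := by
        intro ω
        refine Finset.sum_congr rfl (fun j hj => ?_)
        rw [dif_pos (Finset.mem_range.mp hj)]
      have hrw : ∀ ω, ENNReal.ofReal (Real.exp (-(∑ j ∈ Finset.range (n+2), Y j ω)))
          = F (g (fun i : Fin (n+1) => Y i ω), Y (n+1) ω) := by
        intro ω
        show ENNReal.ofReal (Real.exp (-(∑ j ∈ Finset.range (n+2), Y j ω)))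
          = ENNReal.ofReal (Real.exp (-((g fun i : Fin (n+1) => Y i ω) + Y (n+1) ω)))
        rw [hgY ω, Finset.sum_range_succ]
      have hinner : ∀ x : ℝ, ∫⁻ u, F (x, u) ∂(expMeasure l)
          = ENNReal.ofReal (Real.exp (-x)) * ENNReal.ofReal (l/(l+1)) := by
        intro x
        have : ∀ u : ℝ, F (x, u) = ENNReal.ofReal (Real.exp (-x)) * ENNReal.ofReal (Real.exp (-u)) := by
          intro u
          show ENNReal.ofReal (Real.exp (-(x + u))) = _
          rw [← ENNReal.ofReal_mul (Real.exp_nonneg _), ← Real.exp_add]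
          congr 1
          ring
        simp only [this]
        rw [lintegral_const_mul _ hfm, huniv_exp_neg hl]
      calc ∫⁻ ω, ENNReal.ofReal (Real.exp (-(∑ j ∈ Finset.range (n+2), Y j ω))) ∂P
          = ∫⁻ ω, F (g (fun i : Fin (n+1) => Y i ω), Y (n+1) ω) ∂P := by simp only [hrw]
        _ = ∫⁻ ω, ∫⁻ u, F (g (fun i : Fin (n+1) => Y i ω), u) ∂(expMeasure l) ∂P :=
            lintegral_comp_indep hmeas hdist hindep n g hgm F hFm
        _ = ∫⁻ ω, ENNReal.ofReal (Real.exp (-(∑ j ∈ Finset.range (n+1), Y j ω)))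
              * ENNReal.ofReal (l/(l+1)) ∂P := by
            refine lintegral_congr (fun ω => ?_)
            rw [hinner, hgY]
        _ = (∫⁻ ω, ENNReal.ofReal (Real.exp (-(∑ j ∈ Finset.range (n+1), Y j ω))) ∂P)
              * ENNReal.ofReal (l/(l+1)) := by
            exact lintegral_mul_const _
              (show Measurable fun ω =>
                  ENNReal.ofReal (Real.exp (-(∑ j ∈ Finset.range (n+1), Y j ω))) from
                (Real.measurable_exp.comp
                  (Finset.measurable_sum _ (fun j _ => hmeas j)).neg).ennreal_ofReal)
        _ ≤ ENNReal.ofReal ((l/(l+1))^(n+1)) * ENNReal.ofReal (l/(l+1)) :=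
            mul_le_mul_left ih _
        _ = ENNReal.ofReal ((l/(l+1))^(n+2)) := by
            rw [← ENNReal.ofReal_mul (by positivity), ← pow_succ]

lemma P_notGood (hl : 0 < l) (hmeas : ∀ i, Measurable (Y i))
    (hdist : ∀ i, P.map (Y i) = expMeasure l)
    (hindep : iIndepFun Y P) :
    P {ω | ¬ ((∀ i, 0 < Y i ω) ∧
      (∀ R : ℕ, ∃ n : ℕ, (R:ℝ) < ∑ j ∈ Finset.range (n+1), Y j ω))} = 0 := by
  have hsub : {ω | ¬ ((∀ i, 0 < Y i ω) ∧
      (∀ R : ℕ, ∃ n : ℕ, (R:ℝ) < ∑ j ∈ Finset.range (n+1), Y j ω))}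
      ⊆ (⋃ i, {ω | Y i ω ≤ 0}) ∪
        (⋃ R : ℕ, {ω | ∀ n : ℕ, ∑ j ∈ Finset.range (n+1), Y j ω ≤ (R:ℝ)}) := by
    intro ω hω
    simp only [Set.mem_setOf_eq, not_and_or, not_forall] at hω
    rcases hω with h | h
    · left
      obtain ⟨i, hi⟩ := h
      exact Set.mem_iUnion.mpr ⟨i, not_lt.mp hi⟩
    · right
      obtain ⟨R, hR⟩ := h
      refine Set.mem_iUnion.mpr ⟨R, fun n => ?_⟩
      by_contra hcon
      exact hR ⟨n, not_le.mp hcon⟩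
  refine measure_mono_null hsub (measure_union_null ?_ ?_)
  · refine measure_iUnion_null (fun i => ?_)
    have : {ω | Y i ω ≤ 0} = Y i ⁻¹' (Iic 0) := rfl
    rw [this, ← Measure.map_apply (hmeas i) measurableSet_Iic, hdist i,
      expMeasure_Iic_zero hl]
  · refine measure_iUnion_null (fun R => ?_)
    set Bad : Set Ω := {ω | ∀ n : ℕ, ∑ j ∈ Finset.range (n+1), Y j ω ≤ (R:ℝ)} with hBad
    have hbound : ∀ n : ℕ, P Bad ≤ ENNReal.ofReal (Real.exp R * (l/(l+1))^(n+1)) := by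
      intro n
      set S : Set Ω := {ω | ∑ j ∈ Finset.range (n+1), Y j ω ≤ (R:ℝ)} with hS
      have hSm : MeasurableSet S :=
        measurableSet_le (Finset.measurable_sum _ (fun j _ => hmeas j)) measurable_const
      have h1 : P Bad ≤ P S := measure_mono (fun ω hω => hω n)
      have h2 : P S ≤ ENNReal.ofReal (Real.exp R)
          * ∫⁻ ω, ENNReal.ofReal (Real.exp (-(∑ j ∈ Finset.range (n+1), Y j ω))) ∂P := by
        rw [← lintegral_indicator_one hSm, ← lintegral_const_mul _
          (show Measurable fun ω =>
              ENNReal.ofReal (Real.exp (-(∑ j ∈ Finset.range (n+1), Y j ω))) from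
            (Real.measurable_exp.comp
              (Finset.measurable_sum _ (fun j _ => hmeas j)).neg).ennreal_ofReal)]
        refine lintegral_mono (fun ω => ?_)
        by_cases hω : ω ∈ S
        · rw [Set.indicator_of_mem hω, Pi.one_apply,
            ← ENNReal.ofReal_mul (Real.exp_nonneg _), ← Real.exp_add, ← ENNReal.ofReal_one]
          refine ENNReal.ofReal_le_ofReal (Real.one_le_exp ?_)
          have := hω
          simp only [hS, Set.mem_setOf_eq] at this
          linarith
        · rw [Set.indicator_of_notMem hω]
          exact bot_le
      calc P Bad ≤ P S := h1
        _ ≤ _ := h2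
        _ ≤ ENNReal.ofReal (Real.exp R) * ENNReal.ofReal ((l/(l+1))^(n+1)) :=
            mul_le_mul_right (exp_neg_tau_le hl hmeas hdist hindep n) _
        _ = ENNReal.ofReal (Real.exp R * (l/(l+1))^(n+1)) := by
            rw [ENNReal.ofReal_mul (Real.exp_nonneg _)]
    have hq1 : l/(l+1) < 1 := by
      rw [div_lt_one (by linarith)]
      linarith
    have hq0 : (0:ℝ) ≤ l/(l+1) := by positivity
    have htend : Tendsto (fun n : ℕ => ENNReal.ofReal (Real.exp R * (l/(l+1))^(n+1)))
        atTop (nhds 0) := by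
      have h1 : Tendsto (fun n : ℕ => (l/(l+1))^(n+1)) atTop (nhds 0) :=
        (tendsto_pow_atTop_nhds_zero_of_lt_one hq0 hq1).comp (tendsto_add_atTop_nat 1)
      have h2 : Tendsto (fun n : ℕ => Real.exp R * (l/(l+1))^(n+1)) atTop (nhds 0) := by
        simpa using h1.const_mul (Real.exp R)
      have h3 := (ENNReal.continuous_ofReal.tendsto 0).comp h2
      rw [ENNReal.ofReal_zero] at h3
      exact h3
    have : P Bad ≤ 0 := ge_of_tendsto htend (Filter.Eventually.of_forall hbound)
    exact le_antisymm this bot_le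

end AS

end HTproof

end Aux

open MeasureTheory ProbabilityTheory Filter Real Set HTproof in
open scoped ENNReal in


/-- Let `T_1 = τ_1` and `T_{d+1} = min {τ_i : τ_i > T_d + Δ}` be the
depth-increase times of the fictitious honest tree and `D_h(t)` its depth at time `t`. For
every `ε ∈ (0,1)` there exist `A > 0` and `α > 0` such that for all `t > 0`,
`P(D_h(t) < (1−ε) λ_h t / (1 + λ_h Δ)) ≤ A e^{−α t}`. -/
theorem honest_tree_growth_lower_bound
    {Ω : Type*} [MeasurableSpace Ω] (P : Measure Ω) [IsProbabilityMeasure P]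
    (lambda_h : ℝ) (hlh : 0 < lambda_h) (Δ : ℝ) (hΔ : 0 ≤ Δ)
    (Y : ℕ → Ω → ℝ)
    (hmeas : ∀ i, Measurable (Y i))
    (hdist : ∀ i, P.map (Y i) = expMeasure lambda_h)
    (hindep : iIndepFun Y P)
    (T : ℕ → Ω → ℝ)
    (hT1 : ∀ ω, T 1 ω = tau Y 1 ω)
    (hTrec : ∀ d : ℕ, 1 ≤ d → ∀ ω,
      T (d + 1) ω = sInf {x : ℝ | ∃ i : ℕ, 1 ≤ i ∧ x = tau Y i ω ∧ T d ω + Δ < x})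
    (ε : ℝ) (hε0 : 0 < ε) (hε1 : ε < 1) :
    ∃ A : ℝ, 0 < A ∧ ∃ α : ℝ, 0 < α ∧ ∀ t : ℝ, 0 < t →
      P {ω | (Dh T t ω : ℝ) < (1 - ε) * lambda_h * t / (1 + lambda_h * Δ)} ≤
        ENNReal.ofReal (A * Real.exp (-α * t)) := by
  set l : ℝ := lambda_h with hldef
  set s : ℝ := ε * l / 2 with hsdef
  have hs0 : 0 < s := by rw [hsdef]; positivity
  have hsl : s < l := by rw [hsdef]; nlinarith
  have hls : 0 < l - s := by linarith
  set q : ℝ := s * (Δ + 1/(l - s)) with hqdef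
  have hq0 : 0 ≤ q := by
    rw [hqdef]
    have : (0:ℝ) ≤ Δ + 1/(l-s) := by positivity
    positivity
  set α : ℝ := ε * s / 2 with hαdef
  have hα0 : 0 < α := by rw [hαdef]; positivity
  have hden : (0:ℝ) < 1 + l * Δ := by nlinarith
  set c0 : ℝ := (1 - ε) * l / (1 + l * Δ) with hc0def
  have hc00 : 0 < c0 := div_pos (mul_pos (by linarith) hlh) hden
  -- the key scalar inequality
  have he2 : (0:ℝ) < 1 - ε/2 := by linarith
  have hkey : c0 * q ≤ s - α := by
    have hsα : s - α = s * (1 - ε/2) := by rw [hαdef]; ring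
    have hlq : l - s = l * (1 - ε/2) := by rw [hsdef]; ring
    have hmain : (1 - ε) * (l*Δ + 1/(1-ε/2)) ≤ (1 - ε/2) * (1 + l*Δ) := by
      have h1 : (1 - ε)/(1 - ε/2) ≤ (1 - ε/2) := by
        rw [div_le_iff₀ he2]
        nlinarith [sq_nonneg ε]
      have h2 : (0:ℝ) ≤ l * Δ := mul_nonneg hlh.le hΔ
      have h3 : (1 - ε) * (1/(1-ε/2)) ≤ 1 - ε/2 := by
        rw [mul_one_div]
        exact h1
      nlinarith
    have h2 : l/(l-s) = 1/(1-ε/2) := by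
      rw [hlq]
      field_simp
    rw [hsα, hc0def, hqdef, div_mul_eq_mul_div, div_le_iff₀ hden]
    have h1 : (1 - ε) * l * (s * (Δ + 1/(l-s))) = s * ((1 - ε) * (l*Δ + l/(l-s))) := by
      ring
    rw [h1, h2]
    calc s * ((1 - ε) * (l*Δ + 1/(1-ε/2))) ≤ s * ((1 - ε/2) * (1 + l*Δ)) :=
          mul_le_mul_of_nonneg_left hmain hs0.le
      _ = s * (1 - ε/2) * (1 + l*Δ) := by ring
  refine ⟨Real.exp q, Real.exp_pos q, α, hα0, fun t ht => ?_⟩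
  set d : ℕ := ⌈c0 * t⌉₊ with hddef
  have hd1 : 1 ≤ d := Nat.one_le_iff_ne_zero.mpr (by
    have : 0 < c0 * t := mul_pos hc00 ht
    simp [hddef, Nat.ceil_eq_zero, not_le, this])
  have hdle : (d:ℝ) - 1 ≤ c0 * t := by
    have := Nat.ceil_lt_add_one (le_of_lt (mul_pos hc00 ht))
    rw [hddef]
    push_cast
    linarith
  have hced : c0 * t ≤ (d:ℝ) := Nat.le_ceil _
  have hEt : (1 - ε) * lambda_h * t / (1 + lambda_h * Δ) = c0 * t := by
    rw [hc0def, ← hldef]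
    ring
  -- event inclusion
  set Hset : ℕ → Set Ω := fun n => {ω | (st Δ d (fun i => Y i ω) n).1 = d
      ∧ t < (st Δ d (fun i => Y i ω) n).2.1} with hHdef
  set B : Set Ω := {ω | ¬ ((∀ i, 0 < Y i ω) ∧
      (∀ R : ℕ, ∃ n : ℕ, (R:ℝ) < ∑ j ∈ Finset.range (n+1), Y j ω))} with hBdef
  have hsub : {ω | (Dh T t ω : ℝ) < (1 - ε) * lambda_h * t / (1 + lambda_h * Δ)}
      ⊆ B ∪ ⋃ n, Hset n := by
    intro ω hω
    simp only [Set.mem_setOf_eq, hEt] at hω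
    by_cases hg : (∀ i, 0 < Y i ω) ∧
        (∀ R : ℕ, ∃ n : ℕ, (R:ℝ) < ∑ j ∈ Finset.range (n+1), Y j ω)
    · right
      obtain ⟨hy, hubN⟩ := hg
      have hub' : ∀ r : ℝ, ∃ n : ℕ, r < ∑ j ∈ Finset.range (n+1), (fun i => Y i ω) j := by
        intro r
        obtain ⟨R, hR⟩ := exists_nat_ge r
        obtain ⟨n, hn⟩ := hubN R
        exact ⟨n, lt_of_le_of_lt hR hn⟩
      have hy' : ∀ i, 0 < (fun i => Y i ω) i := hy
      have hT1' : (fun e => T e ω) 1 = ∑ j ∈ Finset.range 1, (fun i => Y i ω) j := hT1 ω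
      have hTrec' : ∀ e : ℕ, 1 ≤ e → (fun e => T e ω) (e + 1)
          = sInf {x : ℝ | ∃ i : ℕ, 1 ≤ i ∧
              x = ∑ j ∈ Finset.range i, (fun i => Y i ω) j ∧ (fun e => T e ω) e + Δ < x} :=
        fun e he => hTrec e he ω
      have hTd : t < T d ω := by
        by_contra hcon
        push_neg at hcon
        have hmem : d ∈ {i : ℕ | 1 ≤ i ∧ T i ω ≤ t} := ⟨hd1, hcon⟩
        obtain ⟨n₀, hn₀⟩ := hub' t
        have hbdd : BddAbove {i : ℕ | 1 ≤ i ∧ T i ω ≤ t} := by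
          refine ⟨n₀, fun i hi => ?_⟩
          by_contra hcon2
          push_neg at hcon2
          have h5 : (∑ j ∈ Finset.range i, Y j ω) ≤ T i ω :=
            tau_le_T (y := fun i => Y i ω) (T := fun e => T e ω)
              hΔ hy' hub' hT1' hTrec' i hi.1
          have h6 : (∑ j ∈ Finset.range (n₀+1), Y j ω) ≤ ∑ j ∈ Finset.range i, Y j ω :=
            (tau_strictMono hy').monotone (by omega)
          have := hi.2
          linarith
        have hDd : d ≤ Dh T t ω := le_csSup hbdd hmem
        have : (d:ℝ) ≤ (Dh T t ω : ℝ) := Nat.cast_le.mpr hDd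
        linarith
      obtain ⟨n, hn⟩ := exists_hit_top (y := fun i => Y i ω) hΔ hd1 hy' hub'
      have hB := B_eq_T (d := d) (y := fun i => Y i ω) (T := fun e => T e ω) hΔ hy' hT1' hTrec' n
      refine Set.mem_iUnion.mpr ⟨n, ⟨hn, ?_⟩⟩
      rw [hB, hn]
      exact hTd
    · exact Or.inl hg
  have hHmono : Monotone Hset := by
    refine monotone_nat_of_le_succ (fun n ω hω => ?_)
    have hω1 : (st Δ d (fun i => Y i ω) n).1 = d := hω.1
    have ha := st_fst_mono (Δ := Δ) (d := d) (y := fun i => Y i ω) n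
    have hb := st_fst_le (Δ := Δ) (y := fun i => Y i ω) hd1 (n+1)
    have h1 : (st Δ d (fun i => Y i ω) (n+1)).1 = d := by omega
    refine ⟨h1, ?_⟩
    rw [st_frozen n (by omega)]
    exact hω.2
  calc P {ω | (Dh T t ω : ℝ) < (1 - ε) * lambda_h * t / (1 + lambda_h * Δ)}
      ≤ P (B ∪ ⋃ n, Hset n) := measure_mono hsub
    _ ≤ P B + P (⋃ n, Hset n) := measure_union_le _ _
    _ = P (⋃ n, Hset n) := by
        rw [hBdef, P_notGood hlh hmeas hdist hindep, zero_add]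
    _ = ⨆ n, P (Hset n) := Directed.measure_iUnion hHmono.directed_le
    _ ≤ ENNReal.ofReal ((l/(l-s))^d * Real.exp (s*Δ*d - s*Δ - s*t)) := by
        refine iSup_le (fun n => ?_)
        exact measure_Hn_le hlh hs0 hsl hΔ hmeas hdist hindep t n
    _ ≤ ENNReal.ofReal (Real.exp q * Real.exp (-α * t)) := by
        refine ENNReal.ofReal_le_ofReal ?_
        have h1 : l/(l-s) ≤ Real.exp (s/(l-s)) := by
          have h2 : l/(l-s) = s/(l-s) + 1 := by rw [div_add_one hls.ne']; congr 1; ring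
          rw [h2]
          exact Real.add_one_le_exp _
        have hpow : (l/(l-s))^d ≤ Real.exp ((d:ℝ) * (s/(l-s))) := by
          calc (l/(l-s))^d ≤ (Real.exp (s/(l-s)))^d :=
                pow_le_pow_left₀ (by positivity) h1 d
            _ = Real.exp ((d:ℝ) * (s/(l-s))) := by
                rw [← Real.exp_nat_mul]
        have hexpineq : (d:ℝ) * (s/(l-s)) + (s*Δ*d - s*Δ - s*t) ≤ q + (-α * t) := by
          have hqd : (d:ℝ) * (s/(l-s)) + s*Δ*(d:ℝ) = (d:ℝ) * q := by
            rw [hqdef]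
            field_simp
            ring
          have hdq : ((d:ℝ) - 1) * q ≤ (c0 * t) * q :=
            mul_le_mul_of_nonneg_right hdle hq0
          have hc0qt : (c0 * q) * t ≤ (s - α) * t :=
            mul_le_mul_of_nonneg_right hkey ht.le
          nlinarith [mul_nonneg hs0.le hΔ]
        calc (l/(l-s))^d * Real.exp (s*Δ*d - s*Δ - s*t)
            ≤ Real.exp ((d:ℝ) * (s/(l-s))) * Real.exp (s*Δ*d - s*Δ - s*t) :=
              mul_le_mul_of_nonneg_right hpow (Real.exp_nonneg _)
          _ = Real.exp ((d:ℝ) * (s/(l-s)) + (s*Δ*d - s*Δ - s*t)) := by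
              rw [← Real.exp_add]
          _ ≤ Real.exp (q + (-α * t)) := Real.exp_le_exp.mpr hexpineq
          _ = Real.exp q * Real.exp (-α * t) := Real.exp_add _ _
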